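/- Let k be a field and L a finite Galois field extension of k of degree r, and let n ≥ 1 be an integer. Then the n-fold tensor power L^{⊗_k n} = ⨂_{i : Fin n} L is isomorphic, as a k-algebra, to the product of r^{n−1} copies of L, i.e. there exists a k-algebra isomorphism L^{⊗_k n} ≅ (Fin (r^{n−1}) → L). -/

import Mathlib

open scoped TensorProduct

set_option synthInstance.maxHeartbeats 1000000
set_option maxHeartbeats 1000000

open Module PiTensorProduct

section Helpers

variable (R A : Type*) [CommSemiring R] [Semiring A] [Algebra R A]

/-- Reindexing a power of an algebra along an equivalence of index types. -/
def AlgEquivAux.piCongr {ι ι' : Type*} (e : ι ≃ ι') : (ι → A) ≃ₐ[R] (ι' → A) where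
  toFun f := f ∘ e.symm
  invFun f := f ∘ e
  left_inv f := by funext i; simp
  right_inv f := by funext i; simp
  map_mul' f g := rfl
  map_add' f g := rfl
  commutes' r := rfl

/-- Currying for powers of an algebra. -/
def AlgEquivAux.curry {ι κ : Type*} : (ι × κ → A) ≃ₐ[R] (ι → κ → A) where
  toFun := Function.curry
  invFun := Function.uncurry
  left_inv f := rfl
  right_inv f := rfl
  map_mul' f g := rfl
  map_add' f g := rfl
  commutes' r := rfl

end Helpers

section BinarySplit

variable (k L : Type*) [Field k] [Field L] [Algebra k L] [FiniteDimensional k L] [IsGalois k L]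

/-- The canonical map `L ⊗[k] L → ((L →ₐ[k] L) → L)`, `x ⊗ y ↦ (σ ↦ σ x * y)`. -/
noncomputable def galSplitHom : (L ⊗[k] L) →ₐ[k] ((L →ₐ[k] L) → L) :=
  Algebra.TensorProduct.productMap (Pi.algHom k _ fun σ => σ)
    (Pi.constAlgHom k (L →ₐ[k] L) L)

@[simp] lemma galSplitHom_tmul (x y : L) :
    galSplitHom k L (x ⊗ₜ y) = fun σ => σ x * y := by
  simp [galSplitHom]
  rfl

noncomputable instance : Fintype (L →ₐ[k] L) := minpoly.AlgHom.fintype k L L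

lemma card_algHom_self : Fintype.card (L →ₐ[k] L) = finrank k L :=
  AlgHom.card_of_splits k L L fun x => Normal.splits inferInstance x

lemma linIndep_algHom : LinearIndependent L (fun σ : (L →ₐ[k] L) => (σ : L → L)) :=
  (linearIndependent_monoidHom L L).comp ((↑) : (L →ₐ[k] L) → L →* L)
    fun f g h => by
      ext x
      exact congrFun (congrArg DFunLike.coe h) x

lemma galSplitHom_surjective : Function.Surjective (galSplitHom k L) := by
  classical
  set S := (L →ₐ[k] L)
  have htop : Submodule.span L (Set.range fun x : L => (fun σ : S => σ x)) = ⊤ := by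
    by_contra h
    obtain ⟨f, hf0, hf⟩ :=
      Submodule.exists_dual_map_eq_bot_of_lt_top (lt_top_iff_ne_top.mpr h) inferInstance
    have hvanish : ∀ x : L, f (fun σ : S => σ x) = 0 := by
      intro x
      have : (fun σ : S => σ x) ∈ Submodule.span L (Set.range fun x : L => (fun σ : S => σ x)) :=
        Submodule.subset_span ⟨x, rfl⟩
      have := Submodule.mem_map_of_mem (f := f) this
      rw [hf] at this
      exact (Submodule.mem_bot L).1 this
    set c : S → L := fun σ => f (fun j => if σ = j then 1 else 0) with hc
    have expand : ∀ g : S → L, f g = ∑ σ : S, g σ • c σ := fun g =>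
      LinearMap.pi_apply_eq_sum_univ f g
    have hzero : ∀ σ : S, c σ = 0 := by
      have hli := Fintype.linearIndependent_iff.mp (linIndep_algHom k L) c
      refine hli ?_
      funext x
      have hx := hvanish x
      rw [expand] at hx
      simpa [Finset.sum_apply, smul_eq_mul, mul_comm] using hx
    apply hf0
    refine LinearMap.ext fun g => ?_
    rw [expand]
    simp [hzero]
  intro g
  have hg : g ∈ Submodule.span L (Set.range fun x : L => (fun σ : S => σ x)) := by
    rw [htop]; trivial
  refine Submodule.span_induction ?_ ?_ ?_ ?_ hg
  · rintro _ ⟨x, rfl⟩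
    exact ⟨x ⊗ₜ 1, by simp; rfl⟩
  · exact ⟨0, map_zero _⟩
  · rintro a b - - ⟨u, rfl⟩ ⟨v, rfl⟩
    exact ⟨u + v, map_add _ _ _⟩
  · rintro c a - ⟨u, rfl⟩
    refine ⟨(1 ⊗ₜ c) * u, ?_⟩
    rw [_root_.map_mul]
    funext σ
    simp [smul_eq_mul, mul_comm]

lemma galSplitHom_bijective : Function.Bijective (galSplitHom k L) := by
  have hsurj := galSplitHom_surjective k L
  have hdim : finrank k (L ⊗[k] L) = finrank k ((L →ₐ[k] L) → L) := by
    rw [Module.finrank_tensorProduct]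
    have : finrank k ((L →ₐ[k] L) → L) = finrank k L * finrank L ((L →ₐ[k] L) → L) :=
      (Module.finrank_mul_finrank k L _).symm
    rw [this, Module.finrank_pi, card_algHom_self]
  exact ⟨(LinearMap.injective_iff_surjective_of_finrank_eq_finrank hdim).mpr hsurj, hsurj⟩

/-- The splitting `L ⊗[k] L ≃ₐ[k] ((L →ₐ[k] L) → L)` for a finite Galois extension. -/
noncomputable def galSplit : (L ⊗[k] L) ≃ₐ[k] ((L →ₐ[k] L) → L) :=
  AlgEquiv.ofBijective (galSplitHom k L) (galSplitHom_bijective k L)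

/-- The splitting `L ⊗[k] L ≃ₐ[k] (Fin (finrank k L) → L)`. -/
noncomputable def galSplitFin : (L ⊗[k] L) ≃ₐ[k] (Fin (finrank k L) → L) :=
  (galSplit k L).trans (AlgEquivAux.piCongr k L
    ((Fintype.equivFinOfCardEq (card_algHom_self k L))))

end BinarySplit


section Peel

variable (k L : Type*) [Field k] [Field L] [Algebra k L]

variable (n : ℕ)

lemma fin_cons_one : (Fin.cons 1 1 : Fin (n+1) → L) = 1 := by
  funext i
  refine Fin.cases ?_ ?_ i <;> simp

lemma fin_cons_mul (y z : Fin n → L) :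
    (Fin.cons 1 (y * z) : Fin (n+1) → L) = Fin.cons 1 y * Fin.cons 1 z := by
  funext i
  refine Fin.cases ?_ ?_ i <;> simp

lemma fin_cons_mulSingle (j : Fin n) (x : L) :
    (Fin.cons 1 (Pi.mulSingle j x) : Fin (n+1) → L) = Pi.mulSingle j.succ x := by
  funext i
  refine Fin.cases ?_ ?_ i
  · simp [Pi.mulSingle, Function.update, (Fin.succ_ne_zero j).symm]
  · intro m
    by_cases h : m = j
    · subst h; simp
    · simp [Pi.mulSingle_apply, h, fun hh => h (Fin.succ_injective _ hh)]

lemma fin_tail_one : Fin.tail (1 : Fin (n+1) → L) = 1 := rfl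

lemma fin_tail_mulSingle_zero (x : L) :
    Fin.tail (Pi.mulSingle (0 : Fin (n+1)) x : Fin (n+1) → L) = (1 : Fin n → L) := by
  funext m
  simp [Fin.tail, Pi.mulSingle_apply, Fin.succ_ne_zero m]

lemma fin_tail_mulSingle_succ (j : Fin n) (x : L) :
    Fin.tail (Pi.mulSingle (j.succ : Fin (n+1)) x : Fin (n+1) → L) = (Pi.mulSingle j x : Fin n → L) := by
  funext m
  by_cases h : m = j
  · subst h; simp [Fin.tail]
  · simp [Fin.tail, Pi.mulSingle_apply, h, fun hh => h (Fin.succ_injective _ hh)]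

lemma mulSingle_succ_zero (j : Fin n) (x : L) :
    (Pi.mulSingle (j.succ : Fin (n+1)) x : Fin (n+1) → L) 0 = 1 := by
  simp [Pi.mulSingle_apply, (Fin.succ_ne_zero j).symm]

/-- The multilinear map underlying `peelHom`. -/
noncomputable def peelML :
    MultilinearMap k (fun _ : Fin (n+1) => L) (L ⊗[k] (⨂[k] _ : Fin n, L)) :=
  LinearMap.uncurryLeft
    { toFun := fun a => (TensorProduct.mk k L _ a).compMultilinearMap (tprod k)
      map_add' := by
        intro a b
        ext y
        simp [TensorProduct.add_tmul]
      map_smul' := by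
        intro c a
        ext y
        simp [TensorProduct.smul_tmul'] }

@[simp] lemma peelML_apply (x : Fin (n+1) → L) :
    peelML k L n x = x 0 ⊗ₜ tprod k (Fin.tail x) := rfl

/-- Peeling off the first factor of a tensor power, as an algebra map. -/
noncomputable def peelHom :
    (⨂[k] _ : Fin (n+1), L) →ₐ[k] (L ⊗[k] (⨂[k] _ : Fin n, L)) :=
  liftAlgHom (peelML k L n)
    (by simp only [peelML_apply, Pi.one_apply, fin_tail_one]; rfl)
    (by
      intro x y
      simp only [peelML_apply, Pi.mul_apply, Algebra.TensorProduct.tmul_mul_tmul]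
      congr 1
      have : Fin.tail (x * y) = Fin.tail x * Fin.tail y := rfl
      rw [this, ← tprod_mul_tprod])

/-- The inverse of `peelHom`. -/
noncomputable def unpeelHom :
    (L ⊗[k] (⨂[k] _ : Fin n, L)) →ₐ[k] (⨂[k] _ : Fin (n+1), L) :=
  Algebra.TensorProduct.lift (singleAlgHom (R := k) (A := fun _ : Fin (n+1) => L) 0)
    (liftAlgHom ((tprod k (s := fun _ : Fin (n+1) => L)).curryLeft 1)
      (by simp [fin_cons_one, one_def])
      (by
        intro y z
        simp only [MultilinearMap.curryLeft_apply, fin_cons_mul, tprod_mul_tprod]))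
    (fun a b => Commute.all _ _)

lemma lift_curry_one :
    (PiTensorProduct.lift ((tprod k (s := fun _ : Fin (n+1) => L)).curryLeft 1))
      (1 : ⨂[k] _ : Fin n, L) = 1 := by
  rw [one_def]
  simp only [PiTensorProduct.lift.tprod, MultilinearMap.curryLeft_apply, fin_cons_one]
  rw [← one_def]

lemma peel_unpeel : (peelHom k L n).comp (unpeelHom k L n) = AlgHom.id k _ := by
  apply Algebra.TensorProduct.ext
  · ext x
    show peelHom k L n (unpeelHom k L n (x ⊗ₜ 1)) = x ⊗ₜ 1
    simp [unpeelHom, peelHom, MonoidHom.mulSingle_apply, fin_tail_mulSingle_zero, lift_curry_one, ← one_def]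
  · apply algHom_ext
    intro j
    ext x
    show peelHom k L n (unpeelHom k L n (1 ⊗ₜ PiTensorProduct.tprod k (Pi.mulSingle j x))) =
      1 ⊗ₜ PiTensorProduct.tprod k (Pi.mulSingle j x)
    simp [unpeelHom, peelHom, MonoidHom.mulSingle_apply, fin_cons_mulSingle,
      mulSingle_succ_zero, fin_tail_mulSingle_succ]

lemma unpeel_peel : (unpeelHom k L n).comp (peelHom k L n) = AlgHom.id k _ := by
  apply algHom_ext
  intro i
  ext x
  show unpeelHom k L n (peelHom k L n (PiTensorProduct.tprod k (Pi.mulSingle i x))) =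
    PiTensorProduct.tprod k (Pi.mulSingle i x)
  refine Fin.cases ?_ ?_ i
  · simp [peelHom, unpeelHom, MonoidHom.mulSingle_apply, fin_tail_mulSingle_zero, lift_curry_one, ← one_def]
  · intro j
    simp [peelHom, unpeelHom, MonoidHom.mulSingle_apply, mulSingle_succ_zero,
      fin_tail_mulSingle_succ, fin_cons_mulSingle]

/-- Peeling off the first factor of a tensor power of algebras. -/
noncomputable def peelEquiv :
    (⨂[k] _ : Fin (n+1), L) ≃ₐ[k] (L ⊗[k] (⨂[k] _ : Fin n, L)) :=
  AlgEquiv.ofAlgHom (peelHom k L n) (unpeelHom k L n)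
    (peel_unpeel k L n) (unpeel_peel k L n)

end Peel


section One

variable (k L : Type*) [Field k] [Field L] [Algebra k L]

/-- The one-fold tensor power is the algebra itself. -/
noncomputable def powOneEquiv : (⨂[k] _ : Fin 1, L) ≃ₐ[k] L :=
  AlgEquiv.ofAlgHom
    (liftAlgHom (MultilinearMap.mkPiAlgebra k (Fin 1) L) (by simp)
      (fun x y => by simp [Finset.prod_mul_distrib]))
    (singleAlgHom (R := k) (A := fun _ : Fin 1 => L) 0)
    (by ext x; simp)
    (by
      apply algHom_ext
      intro i
      rw [Subsingleton.elim i 0]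
      ext x
      simp [MonoidHom.mulSingle_apply])

/-- `L` as the power of itself with one factor. -/
def funOneEquiv : L ≃ₐ[k] (Fin 1 → L) where
  toFun x := fun _ => x
  invFun f := f 0
  left_inv x := rfl
  right_inv f := by funext i; rw [Subsingleton.elim i 0]
  map_mul' x y := rfl
  map_add' x y := rfl
  commutes' r := rfl

end One
section Main

variable (k L : Type*) [Field k] [Field L] [Algebra k L] [FiniteDimensional k L] [IsGalois k L]

theorem piTensorPower_aux (m : ℕ) :
    Nonempty ((⨂[k] _ : Fin (m+1), L) ≃ₐ[k] (Fin ((finrank k L) ^ m) → L)) := by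
  induction m with
  | zero =>
    rw [pow_zero]
    exact ⟨(powOneEquiv k L).trans (funOneEquiv k L)⟩
  | succ m ih =>
    obtain ⟨e⟩ := ih
    refine ⟨((((((peelEquiv k L (m+1)).trans
      (Algebra.TensorProduct.congr AlgEquiv.refl e)).trans
      (Algebra.TensorProduct.piRight k k L (fun _ : Fin ((finrank k L) ^ m) => L))).trans
      (AlgEquiv.piCongrRight (fun _ => galSplitFin k L))).trans
      (AlgEquivAux.curry k L).symm).trans
      (AlgEquivAux.piCongr k L finProdFinEquiv)).trans
      (AlgEquivAux.piCongr k L (finCongr (by rw [pow_succ])))⟩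

end Main

/-- Let `L/k` be a finite Galois field extension of degree `r` and let `n ≥ 1`. Then the
`n`-fold tensor power `L^{⊗_k n} = ⨂[k] i : Fin n, L` is isomorphic, as a `k`-algebra, to
the product of `r^(n-1)` copies of `L`. -/
theorem piTensorPower_galois_iso_pi (k L : Type*) [Field k] [Field L] [Algebra k L]
    [IsGalois k L] [FiniteDimensional k L] (r : ℕ) (hr : Module.finrank k L = r)
    (n : ℕ) (hn : 1 ≤ n) :
    Nonempty ((⨂[k] _ : Fin n, L) ≃ₐ[k] (Fin (r ^ (n - 1)) → L)) := by
  subst hr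
  obtain ⟨m, rfl⟩ := Nat.exists_eq_succ_of_ne_zero (by omega : n ≠ 0)
  simpa using piTensorPower_aux k L m
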